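/- Let O, O' be m×m unitary matrices over ℂ, let P be an m×m orthogonal projection matrix (Pᴴ = P and P·P = P) with O·(1 − P) = O'·(1 − P), and let U_1, …, U_T be m×m unitary matrices. Define vectors by ψ_0 = φ_0 = v for some vector v : Fin m → ℂ, and ψ_{t+1} = U_{t+1}·O·ψ_t, φ_{t+1} = U_{t+1}·O'·φ_t for 0 ≤ t < T. Then ‖ψ_T − φ_T‖ ≤ 2·∑_{t=0}^{T−1} ‖P·ψ_t‖, where ‖·‖ is the Euclidean norm. -/

import Mathlib

open Matrix

/-- The Euclidean norm of a complex vector. -/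
noncomputable def euclNorm {m : ℕ} (v : Fin m → ℂ) : ℝ :=
  Real.sqrt (∑ i, ‖v i‖ ^ 2)

lemma euclNorm_eq {m : ℕ} (v : Fin m → ℂ) :
    euclNorm v = ‖(WithLp.equiv 2 (Fin m → ℂ)).symm v‖ := by
  simp [euclNorm, EuclideanSpace.norm_eq]

lemma euclNorm_sq_eq {m : ℕ} (v : Fin m → ℂ) :
    (∑ i, ‖v i‖ ^ 2) = (star v ⬝ᵥ v).re := by
  rw [dotProduct, Complex.re_sum]
  refine Finset.sum_congr rfl fun i _ => ?_
  simp [mul_comm, Complex.mul_conj, ← Complex.normSq_eq_norm_sq, Complex.normSq_apply]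

lemma euclNorm_mulVec_unitary {m : ℕ} (A : Matrix (Fin m) (Fin m) ℂ)
    (hA : A ∈ Matrix.unitaryGroup (Fin m) ℂ) (x : Fin m → ℂ) :
    euclNorm (A.mulVec x) = euclNorm x := by
  unfold euclNorm
  congr 1
  rw [euclNorm_sq_eq, euclNorm_sq_eq]
  congr 1
  rw [Matrix.star_mulVec, Matrix.dotProduct_mulVec, Matrix.vecMul_vecMul,
    ← Matrix.star_eq_conjTranspose, hA.1]
  simp

lemma euclNorm_nonneg {m : ℕ} (v : Fin m → ℂ) : 0 ≤ euclNorm v := Real.sqrt_nonneg _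

lemma euclNorm_sub_le {m : ℕ} (a b : Fin m → ℂ) :
    euclNorm (a - b) ≤ euclNorm a + euclNorm b := by
  simp only [euclNorm_eq]
  rw [show (WithLp.equiv 2 (Fin m → ℂ)).symm (a - b)
      = (WithLp.equiv 2 (Fin m → ℂ)).symm a - (WithLp.equiv 2 (Fin m → ℂ)).symm b from rfl]
  exact norm_sub_le _ _

lemma euclNorm_add_le {m : ℕ} (a b : Fin m → ℂ) :
    euclNorm (a + b) ≤ euclNorm a + euclNorm b := by
  simp only [euclNorm_eq]
  rw [show (WithLp.equiv 2 (Fin m → ℂ)).symm (a + b)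
      = (WithLp.equiv 2 (Fin m → ℂ)).symm a + (WithLp.equiv 2 (Fin m → ℂ)).symm b from rfl]
  exact norm_add_le _ _

theorem hybrid_telescope {m T : ℕ} (O O' P : Matrix (Fin m) (Fin m) ℂ)
    (hO : O ∈ Matrix.unitaryGroup (Fin m) ℂ)
    (hO' : O' ∈ Matrix.unitaryGroup (Fin m) ℂ)
    (hP1 : P.conjTranspose = P) (hP2 : P * P = P)
    (hOP : O * (1 - P) = O' * (1 - P))
    (U : ℕ → Matrix (Fin m) (Fin m) ℂ)
    (hU : ∀ t, 1 ≤ t → t ≤ T → U t ∈ Matrix.unitaryGroup (Fin m) ℂ)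
    (v : Fin m → ℂ) (ψ φ : ℕ → Fin m → ℂ)
    (hψ0 : ψ 0 = v) (hφ0 : φ 0 = v)
    (hψ : ∀ t, t < T → ψ (t + 1) = (U (t + 1)).mulVec (O.mulVec (ψ t)))
    (hφ : ∀ t, t < T → φ (t + 1) = (U (t + 1)).mulVec (O'.mulVec (φ t))) :
    euclNorm (ψ T - φ T) ≤ 2 * ∑ t ∈ Finset.range T, euclNorm (P.mulVec (ψ t)) := by
  have hdiff : O - O' = O * P - O' * P := by
    have h := hOP
    simp only [Matrix.mul_sub, Matrix.mul_one] at h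
    exact sub_eq_sub_iff_sub_eq_sub.mp h
  have key : ∀ t, t ≤ T →
      euclNorm (ψ t - φ t) ≤ 2 * ∑ s ∈ Finset.range t, euclNorm (P.mulVec (ψ s)) := by
    intro t
    induction t with
    | zero =>
      intro _
      simp [hψ0, hφ0, euclNorm]
    | succ t ih =>
      intro hle
      have htT : t < T := hle
      have ih' := ih (le_of_lt htT)
      rw [hψ t htT, hφ t htT, ← Matrix.mulVec_sub,
        euclNorm_mulVec_unitary _ (hU (t+1) (Nat.le_add_left 1 t) hle)]
      have step1 : O.mulVec (ψ t) - O'.mulVec (φ t)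
          = (O.mulVec (P.mulVec (ψ t)) - O'.mulVec (P.mulVec (ψ t)))
            + (O'.mulVec (ψ t) - O'.mulVec (φ t)) := by
        have h2 : O.mulVec (ψ t) - O'.mulVec (ψ t)
            = O.mulVec (P.mulVec (ψ t)) - O'.mulVec (P.mulVec (ψ t)) := by
          rw [← Matrix.sub_mulVec, hdiff, Matrix.sub_mulVec,
            Matrix.mulVec_mulVec, Matrix.mulVec_mulVec]
        rw [← h2]; abel
      rw [step1]
      calc euclNorm _ ≤ euclNorm (O.mulVec (P.mulVec (ψ t)) - O'.mulVec (P.mulVec (ψ t)))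
            + euclNorm (O'.mulVec (ψ t) - O'.mulVec (φ t)) := euclNorm_add_le _ _
        _ ≤ (euclNorm (O.mulVec (P.mulVec (ψ t))) + euclNorm (O'.mulVec (P.mulVec (ψ t))))
            + euclNorm (ψ t - φ t) := by
              refine add_le_add (euclNorm_sub_le _ _) ?_
              rw [← Matrix.mulVec_sub, euclNorm_mulVec_unitary _ hO']
        _ = 2 * euclNorm (P.mulVec (ψ t)) + euclNorm (ψ t - φ t) := by
              rw [euclNorm_mulVec_unitary _ hO, euclNorm_mulVec_unitary _ hO']; ring
        _ ≤ 2 * euclNorm (P.mulVec (ψ t)) + 2 * ∑ s ∈ Finset.range t, euclNorm (P.mulVec (ψ s)) :=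
              add_le_add_right ih' _
        _ = 2 * ∑ s ∈ Finset.range (t+1), euclNorm (P.mulVec (ψ s)) := by
              rw [Finset.sum_range_succ]; ring
  exact key T le_rfl
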